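/- Let k ≥ 2 be an integer and set s = (k+1)/(2k). Then 1/2 − √(s·(1−s)) = (1/2)·(1 − √(1 − 1/k²)), and for every t ∈ (0,1] the following equivalence holds: (t < s and 2·φ⁻(s,t) − 1 > 0) if and only if t < (1/2)·(1 − √(1 − 1/k²)). -/
import Mathlib


noncomputable section

/-- φ⁺(s,t) = s + t − 2st + 2√(st(1−s)(1−t)). -/
def phiPlus (s t : ℝ) : ℝ :=
  s + t - 2 * s * t + 2 * Real.sqrt (s * t * (1 - s) * (1 - t))

/-- φ⁻(s,t) = s + t − 2st − 2√(st(1−s)(1−t)). -/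
def phiMinus (s t : ℝ) : ℝ :=
  s + t - 2 * s * t - 2 * Real.sqrt (s * t * (1 - s) * (1 - t))

end

set_option maxHeartbeats 1000000 in
/-- the PPT threshold identity and equivalence. With s = (k+1)/(2k),
one has 1/2 − √(s(1−s)) = (1/2)(1 − √(1 − 1/k²)), and for t ∈ (0,1] positivity of the
lower edge 2φ⁻(s,t) − 1 together with t < s is equivalent to t < t_PPT. -/
theorem ppt_threshold (k : ℕ) (hk : 2 ≤ k) :
    (1 / 2 - Real.sqrt ((((k : ℝ) + 1) / (2 * (k : ℝ))) *
        (1 - ((k : ℝ) + 1) / (2 * (k : ℝ)))) =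
      (1 / 2) * (1 - Real.sqrt (1 - 1 / (k : ℝ) ^ 2))) ∧
    (∀ t ∈ Set.Ioc (0 : ℝ) 1,
      ((t < ((k : ℝ) + 1) / (2 * (k : ℝ)) ∧
          0 < 2 * phiMinus (((k : ℝ) + 1) / (2 * (k : ℝ))) t - 1) ↔
        t < (1 / 2) * (1 - Real.sqrt (1 - 1 / (k : ℝ) ^ 2)))) := by
  have hK : (2:ℝ) ≤ (k:ℝ) := by exact_mod_cast hk
  set K := (k:ℝ) with hKdef
  have hK0 : 0 < K := by linarith
  set s := (K + 1) / (2 * K) with hs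
  have hKne : (2 * K) ≠ 0 := by positivity
  have hs_half : 1 / 2 < s := by
    rw [hs, lt_div_iff₀ (by positivity)]
    linarith
  have hs_le1 : s ≤ 1 := by
    rw [hs, div_le_one (by positivity)]
    linarith
  have hs0 : 0 < s := by linarith
  have hu : (0:ℝ) ≤ s * (1 - s) := by
    apply mul_nonneg <;> linarith
  set r := Real.sqrt (s * (1 - s)) with hr
  have hr0 : 0 ≤ r := Real.sqrt_nonneg _
  have hr2 : r ^ 2 = s * (1 - s) := Real.sq_sqrt hu
  have h4u : 1 - 1 / K ^ 2 = 4 * (s * (1 - s)) := by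
    rw [hs]; field_simp; ring
  have hq : Real.sqrt (1 - 1 / K ^ 2) = 2 * r := by
    rw [h4u, show (4:ℝ) * (s * (1 - s)) = 2 ^ 2 * (s * (1 - s)) by ring,
      Real.sqrt_mul (by positivity), Real.sqrt_sq (by norm_num), hr]
  have hpart1 : 1 / 2 - r = 1 / 2 * (1 - Real.sqrt (1 - 1 / K ^ 2)) := by
    rw [hq]; ring
  refine ⟨hpart1, ?_⟩
  rintro t ⟨ht0, ht1⟩
  rw [← hpart1]
  have hP0 : (0:ℝ) ≤ s * t * (1 - s) * (1 - t) := by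
    apply mul_nonneg; apply mul_nonneg; apply mul_nonneg
    all_goals linarith
  set R := Real.sqrt (s * t * (1 - s) * (1 - t)) with hR
  have hR0 : 0 ≤ R := Real.sqrt_nonneg _
  have hR2 : R ^ 2 = s * t * (1 - s) * (1 - t) := Real.sq_sqrt hP0
  have hphi : phiMinus s t = s + t - 2 * s * t - 2 * R := rfl
  rw [hphi]
  constructor
  · rintro ⟨h1, h2⟩
    have hA : 4 * R < (2 * s - 1) * (1 - 2 * t) := by nlinarith
    have h2t : 0 < 1 - 2 * t := by
      by_contra h
      push_neg at h
      have : (2 * s - 1) * (1 - 2 * t) ≤ 0 :=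
        mul_nonpos_of_nonneg_of_nonpos (by linarith) (by linarith)
      linarith
    have hsq : (4 * R) ^ 2 < ((2 * s - 1) * (1 - 2 * t)) ^ 2 := by nlinarith
    have hkey : 4 * (s * (1 - s)) < (1 - 2 * t) ^ 2 := by nlinarith [hR2]
    have hfin : 2 * r < 1 - 2 * t := by
      by_contra hc
      push_neg at hc
      have h1 : (1 - 2 * t) ^ 2 ≤ (2 * r) ^ 2 := pow_le_pow_left₀ h2t.le hc 2
      nlinarith [hr2]
    linarith
  · intro h
    have htr : 2 * r < 1 - 2 * t := by linarith
    have h1 : t < s := by linarith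
    refine ⟨h1, ?_⟩
    have hkey : 4 * (s * (1 - s)) < (1 - 2 * t) ^ 2 := by nlinarith [hr2, hr0]
    have hA2 : (4 * R) ^ 2 < ((2 * s - 1) * (1 - 2 * t)) ^ 2 := by nlinarith [hR2]
    have hApos : 0 < (2 * s - 1) * (1 - 2 * t) := by
      apply mul_pos <;> linarith
    have hfin : 4 * R < (2 * s - 1) * (1 - 2 * t) := by
      by_contra hc
      push_neg at hc
      have h1 : ((2 * s - 1) * (1 - 2 * t)) ^ 2 ≤ (4 * R) ^ 2 :=
        pow_le_pow_left₀ hApos.le hc 2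
      linarith
    nlinarith
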